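/- Let G be a finite simple graph on a vertex type V, let v ∈ V, and let G' be the graph obtained from G by splitting the vertex v: G' has vertex set V ⊕ Unit, where vertices coming from V are adjacent in G' iff they are adjacent in G, and the new vertex ⋆ is adjacent in G' exactly to v and to the neighbors of v in G. If G is ħ-perfect, then G' is ħ-perfect. -/

import Mathlib

open Matrix

/-- A realization of the graph `G` in dimension `d`: a family of Hermitian involutions that
anticommute on edges and commute on non-edges. -/
def IsRealization {V : Type*} (G : SimpleGraph V) (d : ℕ)
    (S : V → Matrix (Fin d) (Fin d) ℂ) : Prop :=
  (∀ i, (S i).IsHermitian) ∧ (∀ i, S i * S i = 1) ∧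
    (∀ i j, G.Adj i j → S i * S j = -(S j * S i)) ∧
    (∀ i j, i ≠ j → ¬G.Adj i j → S i * S j = S j * S i)

/-- The (real) expectation value `ψᴴ A ψ` of a matrix `A` at a vector `ψ`. -/
noncomputable def expectation {d : ℕ} (A : Matrix (Fin d) (Fin d) ℂ) (ψ : Fin d → ℂ) : ℝ :=
  (star ψ ⬝ᵥ (A *ᵥ ψ)).re

/-- The beta value of a realization: supremum over unit vectors of the weighted sum of squared
expectations. -/
noncomputable def betaVal {V : Type*} [Fintype V] {d : ℕ}
    (S : V → Matrix (Fin d) (Fin d) ℂ) (w : V → ℝ) : ℝ :=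
  sSup {r : ℝ | ∃ ψ : Fin d → ℂ, star ψ ⬝ᵥ ψ = 1 ∧
    r = ∑ i, w i * (expectation (S i) ψ) ^ 2}

/-- A finite set of vertices is independent if no two of its members are adjacent. -/
def IsIndepSet {V : Type*} (G : SimpleGraph V) (I : Finset V) : Prop :=
  ∀ a ∈ I, ∀ b ∈ I, ¬G.Adj a b

/-- The weighted independence number. -/
noncomputable def alphaW {V : Type*} [Fintype V] (G : SimpleGraph V) (w : V → ℝ) : ℝ :=
  sSup {r : ℝ | ∃ I : Finset V, IsIndepSet G I ∧ r = ∑ i ∈ I, w i}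

/-- A graph is ħ-perfect if for every realization and every nonnegative weight vector the beta
value equals the weighted independence number. -/
def HbarPerfect {V : Type*} [Fintype V] (G : SimpleGraph V) : Prop :=
  ∀ d : ℕ, 1 ≤ d → ∀ S : V → Matrix (Fin d) (Fin d) ℂ, IsRealization G d S →
    ∀ w : V → ℝ, (∀ i, 0 ≤ w i) → betaVal S w = alphaW G w

/-! ### Auxiliary lemmas -/

open ComplexOrder in
lemma dot_nonneg_re {d : ℕ} (φ : Fin d → ℂ) : 0 ≤ (star φ ⬝ᵥ φ).re :=
  (Complex.nonneg_iff.mp (dotProduct_star_self_nonneg φ)).1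

lemma herm_dot {d : ℕ} {A : Matrix (Fin d) (Fin d) ℂ} (hA : A.IsHermitian) (ψ : Fin d → ℂ) :
    star ψ ⬝ᵥ (A *ᵥ ψ) = ((expectation A ψ : ℝ) : ℂ) := by
  have hs : star (star ψ ⬝ᵥ (A *ᵥ ψ)) = star ψ ⬝ᵥ (A *ᵥ ψ) := by
    conv_lhs => rw [star_dotProduct, star_star, star_mulVec, hA.eq]
    rw [← dotProduct_mulVec]
  have : (starRingEnd ℂ) (star ψ ⬝ᵥ (A *ᵥ ψ)) = star ψ ⬝ᵥ (A *ᵥ ψ) := hs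
  rw [Complex.conj_eq_iff_re] at this
  exact this.symm

lemma exp_sq_le_one {d : ℕ} {A : Matrix (Fin d) (Fin d) ℂ} (hA : A.IsHermitian)
    (hA2 : A * A = 1) {ψ : Fin d → ℂ} (hψ : star ψ ⬝ᵥ ψ = 1) :
    (expectation A ψ) ^ 2 ≤ 1 := by
  set x := expectation A ψ with hx
  set φ : Fin d → ℂ := A *ᵥ ψ - (x : ℂ) • ψ with hφ
  have h0 : 0 ≤ (star φ ⬝ᵥ φ).re := dot_nonneg_re φ
  have t1 : star (A *ᵥ ψ) ⬝ᵥ (A *ᵥ ψ) = 1 := by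
    rw [star_mulVec, hA.eq, ← dotProduct_mulVec, mulVec_mulVec, hA2, one_mulVec, hψ]
  have t2 : star (A *ᵥ ψ) ⬝ᵥ ψ = (x : ℂ) := by
    rw [star_mulVec, hA.eq, ← dotProduct_mulVec]
    exact herm_dot hA ψ
  have t3 : star ψ ⬝ᵥ (A *ᵥ ψ) = (x : ℂ) := herm_dot hA ψ
  have expand : star φ ⬝ᵥ φ =
      (star (A *ᵥ ψ) ⬝ᵥ (A *ᵥ ψ)) - (x : ℂ) * (star (A *ᵥ ψ) ⬝ᵥ ψ)
        - (x : ℂ) * (star ψ ⬝ᵥ (A *ᵥ ψ)) + (x : ℂ) * (x : ℂ) * (star ψ ⬝ᵥ ψ) := by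
    simp only [hφ, star_sub, star_smul, sub_dotProduct, dotProduct_sub, smul_dotProduct,
      dotProduct_smul, smul_eq_mul, Complex.star_def, Complex.conj_ofReal]
    ring
  rw [expand, t1, t2, t3, hψ] at h0
  have : ((1 : ℂ) - x * x - x * x + x * x * 1) = ((1 - x ^ 2 : ℝ) : ℂ) := by
    push_cast; ring
  rw [this, Complex.ofReal_re] at h0
  linarith

lemma exp_add {d : ℕ} (A B : Matrix (Fin d) (Fin d) ℂ) (ψ : Fin d → ℂ) :
    expectation (A + B) ψ = expectation A ψ + expectation B ψ := by
  simp [expectation, add_mulVec, dotProduct_add]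

lemma exp_smul {d : ℕ} (c : ℝ) (A : Matrix (Fin d) (Fin d) ℂ) (ψ : Fin d → ℂ) :
    expectation ((c : ℂ) • A) ψ = c * expectation A ψ := by
  simp [expectation, smul_mulVec, dotProduct_smul]

lemma unit_exists {d : ℕ} (hd : 1 ≤ d) : ∃ ψ : Fin d → ℂ, star ψ ⬝ᵥ ψ = 1 := by
  refine ⟨Pi.single ⟨0, hd⟩ 1, ?_⟩
  classical
  simp [dotProduct, Pi.single_apply, apply_ite]

lemma cs_exists (x y : ℝ) : ∃ c s : ℝ, c ^ 2 + s ^ 2 = 1 ∧ (c * x + s * y) ^ 2 = x ^ 2 + y ^ 2 := by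
  by_cases h : x = 0 ∧ y = 0
  · exact ⟨1, 0, by norm_num, by simp [h.1, h.2]⟩
  · have hr : 0 < x ^ 2 + y ^ 2 := by
      rcases not_and_or.mp h with h | h
      · nlinarith [sq_nonneg y, sq_pos_of_ne_zero h]
      · nlinarith [sq_nonneg x, sq_pos_of_ne_zero h]
    set r := Real.sqrt (x ^ 2 + y ^ 2) with hrdef
    have hr2 : r ^ 2 = x ^ 2 + y ^ 2 := Real.sq_sqrt hr.le
    have hrpos : 0 < r := Real.sqrt_pos.mpr hr
    refine ⟨x / r, y / r, ?_, ?_⟩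
    · field_simp
      linarith [hr2]
    · have : x / r * x + y / r * y = r := by
        field_simp
        linarith [hr2]
      rw [this, hr2]

section helpers

variable {V : Type*} [Fintype V] {d : ℕ}

lemma beta_bdd {S : V → Matrix (Fin d) (Fin d) ℂ} {w : V → ℝ}
    (hH : ∀ i, (S i).IsHermitian) (hI : ∀ i, S i * S i = 1) (hw : ∀ i, 0 ≤ w i) :
    BddAbove {r : ℝ | ∃ ψ : Fin d → ℂ, star ψ ⬝ᵥ ψ = 1 ∧
      r = ∑ i, w i * (expectation (S i) ψ) ^ 2} := by
  refine ⟨∑ i, w i, ?_⟩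
  rintro r ⟨ψ, hψ, rfl⟩
  apply Finset.sum_le_sum
  intro i _
  have h1 := exp_sq_le_one (hH i) (hI i) hψ
  nlinarith [hw i, sq_nonneg (expectation (S i) ψ)]

lemma betaVal_ge {S : V → Matrix (Fin d) (Fin d) ℂ} {w : V → ℝ}
    (hH : ∀ i, (S i).IsHermitian) (hI : ∀ i, S i * S i = 1) (hw : ∀ i, 0 ≤ w i)
    {ψ : Fin d → ℂ} (hψ : star ψ ⬝ᵥ ψ = 1) :
    ∑ i, w i * (expectation (S i) ψ) ^ 2 ≤ betaVal S w :=
  le_csSup (beta_bdd hH hI hw) ⟨ψ, hψ, rfl⟩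

lemma betaVal_le {S : V → Matrix (Fin d) (Fin d) ℂ} {w : V → ℝ} (hd : 1 ≤ d) {b : ℝ}
    (h : ∀ ψ : Fin d → ℂ, star ψ ⬝ᵥ ψ = 1 → ∑ i, w i * (expectation (S i) ψ) ^ 2 ≤ b) :
    betaVal S w ≤ b := by
  obtain ⟨ψ, hψ⟩ := unit_exists hd
  refine csSup_le ⟨_, ψ, hψ, rfl⟩ ?_
  rintro r ⟨ψ', hψ', rfl⟩
  exact h ψ' hψ'

lemma alphaW_ge (G : SimpleGraph V) (w : V → ℝ) {I : Finset V} (hI : IsIndepSet G I) :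
    ∑ i ∈ I, w i ≤ alphaW G w := by
  refine le_csSup ?_ ⟨I, hI, rfl⟩
  apply Set.Finite.bddAbove
  apply Set.Finite.subset (Set.finite_range (fun I : Finset V => ∑ i ∈ I, w i))
  rintro r ⟨I, -, rfl⟩
  exact ⟨I, rfl⟩

lemma alphaW_le (G : SimpleGraph V) (w : V → ℝ) {b : ℝ}
    (h : ∀ I : Finset V, IsIndepSet G I → ∑ i ∈ I, w i ≤ b) : alphaW G w ≤ b := by
  refine csSup_le ⟨0, ∅, ?_, by simp⟩ ?_
  · intro a ha; simp at ha
  rintro r ⟨I, hI, rfl⟩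
  exact h I hI

end helpers

lemma Snew_real {V : Type*} [DecidableEq V] {G : SimpleGraph V} {v : V}
    {G' : SimpleGraph (V ⊕ Unit)}
    (hll : ∀ a b, G'.Adj (Sum.inl a) (Sum.inl b) ↔ G.Adj a b)
    (hnew : ∀ a, G'.Adj (Sum.inl a) (Sum.inr ()) ↔ (a = v ∨ G.Adj a v))
    {d : ℕ} {S' : (V ⊕ Unit) → Matrix (Fin d) (Fin d) ℂ} (hS' : IsRealization G' d S')
    {c s : ℝ} (hcs : c ^ 2 + s ^ 2 = 1) :
    IsRealization G d (fun a => if a = v then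
      (c : ℂ) • S' (Sum.inl v) + (s : ℂ) • S' (Sum.inr ()) else S' (Sum.inl a)) := by
  obtain ⟨hH, hInv, hAnti, hComm⟩ := hS'
  set A := S' (Sum.inl v) with hAdef
  set B := S' (Sum.inr ()) with hBdef
  set M : Matrix (Fin d) (Fin d) ℂ := (c : ℂ) • A + (s : ℂ) • B with hMdef
  have hAB : A * B = -(B * A) := hAnti _ _ ((hnew v).mpr (Or.inl rfl))
  have mulM : ∀ X, M * X = (c : ℂ) • (A * X) + (s : ℂ) • (B * X) := by
    intro X; rw [hMdef, add_mul, smul_mul_assoc, smul_mul_assoc]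
  have Mmul : ∀ X, X * M = (c : ℂ) • (X * A) + (s : ℂ) • (X * B) := by
    intro X; rw [hMdef, mul_add, mul_smul_comm, mul_smul_comm]
  have hco : ((c : ℂ) * c + (s : ℂ) * s) = 1 := by
    norm_cast
    nlinarith [hcs]
  have hMan : ∀ X, A * X = -(X * A) → B * X = -(X * B) → M * X = -(X * M) := by
    intro X h1 h2
    rw [mulM, Mmul, h1, h2, smul_neg, smul_neg, neg_add]
  have hMco : ∀ X, A * X = X * A → B * X = X * B → M * X = X * M := by
    intro X h1 h2
    rw [mulM, Mmul, h1, h2]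
  refine ⟨?_, ?_, ?_, ?_⟩
  · intro a
    dsimp only
    by_cases h : a = v
    · rw [if_pos h]
      show Mᴴ = M
      simp [hMdef, hAdef, hBdef, conjTranspose_add, conjTranspose_smul, Complex.star_def,
        Complex.conj_ofReal, (hH (Sum.inl v)).eq, (hH (Sum.inr ())).eq]
    · rw [if_neg h]; exact hH _
  · intro a
    dsimp only
    by_cases h : a = v
    · rw [if_pos h]
      have e1 : M * M = ((c : ℂ) * c) • (A * A) + ((s : ℂ) * c) • (A * B)
          + ((c : ℂ) * s) • (B * A) + ((s : ℂ) * s) • (B * B) := by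
        rw [hMdef]
        simp only [add_mul, mul_add, smul_mul_assoc, mul_smul_comm, smul_smul, smul_add]
        abel
      rw [e1, hInv, hInv, hAB, smul_neg, mul_comm (c : ℂ) (s : ℂ)]
      have e2 : ((c : ℂ) * c) • (1 : Matrix (Fin d) (Fin d) ℂ) + -(((s : ℂ) * c) • (B * A))
          + ((s : ℂ) * c) • (B * A) + ((s : ℂ) * s) • 1
          = ((c : ℂ) * c + (s : ℂ) * s) • (1 : Matrix (Fin d) (Fin d) ℂ) := by
        rw [add_smul]; abel
      rw [e2, hco, one_smul]
    · rw [if_neg h]; exact hInv _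
  · intro a b hab
    dsimp only
    by_cases ha : a = v <;> by_cases hb : b = v
    · rw [ha, hb] at hab; exact absurd hab G.irrefl
    · rw [if_pos ha, if_neg hb]
      have hvb : G.Adj v b := ha ▸ hab
      exact hMan _ (hAnti _ _ ((hll v b).mpr hvb))
        (hAnti _ _ (((hnew b).mpr (Or.inr hvb.symm)).symm))
    · rw [if_pos hb, if_neg ha]
      have hav : G.Adj a v := hb ▸ hab
      have t := hMan _ (hAnti _ _ ((hll v a).mpr hav.symm))
        (hAnti _ _ (((hnew a).mpr (Or.inr hav)).symm))
      rw [t, neg_neg]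
    · rw [if_neg ha, if_neg hb]
      exact hAnti _ _ ((hll a b).mpr hab)
  · intro a b hne hnadj
    dsimp only
    by_cases ha : a = v <;> by_cases hb : b = v
    · exact absurd (ha.trans hb.symm) hne
    · rw [if_pos ha, if_neg hb]
      have hnvb : ¬G.Adj v b := ha ▸ hnadj
      refine hMco _ ?_ ?_
      · exact hComm _ _ (by simp; exact fun h => hb h.symm) (fun h => hnvb ((hll v b).mp h))
      · refine hComm _ _ (by simp) ?_
        intro h
        rcases (hnew b).mp h.symm with h' | h'
        · exact hb h'
        · exact hnvb h'.symm
    · rw [if_pos hb, if_neg ha]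
      have hnav : ¬G.Adj a v := hb ▸ hnadj
      have hnav' : a ≠ v := fun h => hne (h.trans hb.symm)
      have t : M * S' (Sum.inl a) = S' (Sum.inl a) * M := by
        refine hMco _ ?_ ?_
        · exact hComm _ _ (by simp; exact fun h => hnav' h.symm)
            (fun h => hnav (((hll v a).mp h).symm))
        · refine hComm _ _ (by simp) ?_
          intro h
          rcases (hnew a).mp h.symm with h' | h'
          · exact hnav' h'
          · exact hnav h'
      exact t.symm
    · rw [if_neg ha, if_neg hb]
      exact hComm _ _ (by simp [hne]) (fun h => hnadj ((hll a b).mp h))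

lemma alpha_eq {V : Type*} [Fintype V] [DecidableEq V] (G : SimpleGraph V) (v : V)
    (G' : SimpleGraph (V ⊕ Unit))
    (hll : ∀ a b, G'.Adj (Sum.inl a) (Sum.inl b) ↔ G.Adj a b)
    (hnew : ∀ a, G'.Adj (Sum.inl a) (Sum.inr ()) ↔ (a = v ∨ G.Adj a v))
    (w' : V ⊕ Unit → ℝ) :
    alphaW G' w' = alphaW G
      (fun a => if a = v then max (w' (Sum.inl v)) (w' (Sum.inr ())) else w' (Sum.inl a)) := by
  set w : V → ℝ :=
    fun a => if a = v then max (w' (Sum.inl v)) (w' (Sum.inr ())) else w' (Sum.inl a) with hw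
  have hwv : w v = max (w' (Sum.inl v)) (w' (Sum.inr ())) := by simp [hw]
  have hwa : ∀ a, a ≠ v → w a = w' (Sum.inl a) := by intro a ha; simp [hw, ha]
  have hwle : ∀ a, w' (Sum.inl a) ≤ w a := by
    intro a
    by_cases h : a = v
    · rw [h, hwv]; exact le_max_left _ _
    · rw [hwa a h]
  apply le_antisymm
  · apply alphaW_le
    intro I' hI'
    have hsum : ∑ i ∈ I', w' i
        = ∑ a ∈ I'.toLeft, w' (Sum.inl a) + ∑ b ∈ I'.toRight, w' (Sum.inr b) := by
      conv_lhs => rw [← Finset.toLeft_disjSum_toRight (u := I')]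
      rw [Finset.sum_disjSum]
    have hIind : IsIndepSet G I'.toLeft := fun a ha b hb hadj =>
      hI' _ (Finset.mem_toLeft.mp ha) _ (Finset.mem_toLeft.mp hb) ((hll a b).mpr hadj)
    by_cases hr : Sum.inr () ∈ I'
    · have hR : I'.toRight = {()} := by
        ext x; cases x; simp [Finset.mem_toRight, hr]
      have hvI : v ∉ I'.toLeft := fun h =>
        hI' _ (Finset.mem_toLeft.mp h) _ hr ((hnew v).mpr (Or.inl rfl))
      have key : ∀ x ∈ I'.toLeft, ¬G.Adj x v := fun x hx hadj =>
        hI' _ (Finset.mem_toLeft.mp hx) _ hr ((hnew x).mpr (Or.inr hadj))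
      have hJind : IsIndepSet G (insert v I'.toLeft) := by
        intro a ha b hb
        rcases Finset.mem_insert.mp ha with rfl | ha' <;>
          rcases Finset.mem_insert.mp hb with rfl | hb'
        · exact G.irrefl
        · exact fun hadj => key b hb' hadj.symm
        · exact key a ha'
        · exact hIind a ha' b hb'
      have : ∑ i ∈ I', w' i ≤ ∑ a ∈ insert v I'.toLeft, w a := by
        rw [hsum, hR, Finset.sum_insert hvI]
        simp only [Finset.sum_singleton]
        have h1 : w' (Sum.inr ()) ≤ w v := by rw [hwv]; exact le_max_right _ _
        have h2 : ∑ a ∈ I'.toLeft, w' (Sum.inl a) ≤ ∑ a ∈ I'.toLeft, w a :=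
          Finset.sum_le_sum fun a _ => hwle a
        linarith
      exact this.trans (alphaW_ge G w hJind)
    · have hR : I'.toRight = ∅ := by
        ext x; cases x; simp [Finset.mem_toRight, hr]
      have : ∑ i ∈ I', w' i ≤ ∑ a ∈ I'.toLeft, w a := by
        rw [hsum, hR]
        simp only [Finset.sum_empty, add_zero]
        exact Finset.sum_le_sum fun a _ => hwle a
      exact this.trans (alphaW_ge G w hIind)
  · apply alphaW_le
    intro I hI
    rcases le_total (w' (Sum.inr ())) (w' (Sum.inl v)) with hmax | hmax
    · have hind : IsIndepSet G' (I.image Sum.inl) := by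
        intro x hx y hy
        obtain ⟨a, ha, rfl⟩ := Finset.mem_image.mp hx
        obtain ⟨b, hb, rfl⟩ := Finset.mem_image.mp hy
        rw [hll]
        exact hI a ha b hb
      have hs : ∑ i ∈ I, w i = ∑ x ∈ I.image Sum.inl, w' x := by
        rw [Finset.sum_image (by simp)]
        refine Finset.sum_congr rfl fun a _ => ?_
        by_cases h : a = v
        · rw [h, hwv, max_eq_left hmax]
        · rw [hwa a h]
      rw [hs]
      exact alphaW_ge G' w' hind
    · by_cases hv : v ∈ I
      · have hsub : ∀ a ∈ I.erase v, a ≠ v := fun a ha => Finset.ne_of_mem_erase ha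
        have hnadj : ∀ a ∈ I.erase v, ¬G.Adj a v := fun a ha =>
          hI a (Finset.mem_of_mem_erase ha) v hv
        have hnotmem : Sum.inr () ∉ (I.erase v).image Sum.inl := by simp
        have hind : IsIndepSet G' (insert (Sum.inr ()) ((I.erase v).image Sum.inl)) := by
          intro x hx y hy
          rcases Finset.mem_insert.mp hx with rfl | hx' <;>
            rcases Finset.mem_insert.mp hy with rfl | hy'
          · exact G'.irrefl
          · obtain ⟨b, hb, rfl⟩ := Finset.mem_image.mp hy'
            intro hadj
            rcases (hnew b).mp hadj.symm with h' | h'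
            · exact hsub b hb h'
            · exact hnadj b hb h'
          · obtain ⟨a, ha, rfl⟩ := Finset.mem_image.mp hx'
            intro hadj
            rcases (hnew a).mp hadj with h' | h'
            · exact hsub a ha h'
            · exact hnadj a ha h'
          · obtain ⟨a, ha, rfl⟩ := Finset.mem_image.mp hx'
            obtain ⟨b, hb, rfl⟩ := Finset.mem_image.mp hy'
            rw [hll]
            exact hI a (Finset.mem_of_mem_erase ha) b (Finset.mem_of_mem_erase hb)
        have hs : ∑ i ∈ I, w i
            = ∑ x ∈ insert (Sum.inr ()) ((I.erase v).image Sum.inl), w' x := by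
          rw [Finset.sum_insert hnotmem, Finset.sum_image (by simp),
            ← Finset.add_sum_erase I w hv, hwv, max_eq_right hmax]
          congr 1
          exact Finset.sum_congr rfl fun a ha => hwa a (hsub a ha)
        rw [hs]
        exact alphaW_ge G' w' hind
      · have hind : IsIndepSet G' (I.image Sum.inl) := by
          intro x hx y hy
          obtain ⟨a, ha, rfl⟩ := Finset.mem_image.mp hx
          obtain ⟨b, hb, rfl⟩ := Finset.mem_image.mp hy
          rw [hll]
          exact hI a ha b hb
        have hs : ∑ i ∈ I, w i = ∑ x ∈ I.image Sum.inl, w' x := by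
          rw [Finset.sum_image (by simp)]
          exact Finset.sum_congr rfl fun a ha => hwa a (fun h => hv (h ▸ ha))
        rw [hs]
        exact alphaW_ge G' w' hind

/-- Splitting a vertex of an ħ-perfect graph yields an ħ-perfect graph: the new vertex is
adjacent to the split vertex and to all of its neighbors. -/
theorem stmt_6 {V : Type*} [Fintype V] (G : SimpleGraph V) (v : V)
    (G' : SimpleGraph (V ⊕ Unit))
    (hll : ∀ a b, G'.Adj (Sum.inl a) (Sum.inl b) ↔ G.Adj a b)
    (hnew : ∀ a, G'.Adj (Sum.inl a) (Sum.inr ()) ↔ (a = v ∨ G.Adj a v))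
    (hG : HbarPerfect G) :
    HbarPerfect G' := by
  classical
  intro d hd S' hS' w' hw'
  set w : V → ℝ :=
    fun a => if a = v then max (w' (Sum.inl v)) (w' (Sum.inr ())) else w' (Sum.inl a) with hwdef
  have hwv : w v = max (w' (Sum.inl v)) (w' (Sum.inr ())) := by simp [hwdef]
  have hwa : ∀ a, a ≠ v → w a = w' (Sum.inl a) := by intro a ha; simp [hwdef, ha]
  have hw : ∀ a, 0 ≤ w a := by
    intro a
    by_cases h : a = v
    · rw [h, hwv]; exact le_trans (hw' (Sum.inl v)) (le_max_left _ _)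
    · rw [hwa a h]; exact hw' _
  have halpha : alphaW G' w' = alphaW G w := alpha_eq G v G' hll hnew w'
  obtain ⟨hH', hInv', hA', hC'⟩ := id hS'
  set Snew : ℝ → ℝ → V → Matrix (Fin d) (Fin d) ℂ := fun c s a => if a = v then
      (c : ℂ) • S' (Sum.inl v) + (s : ℂ) • S' (Sum.inr ()) else S' (Sum.inl a) with hSnewdef
  have hSnew : ∀ {c s : ℝ}, c ^ 2 + s ^ 2 = 1 → IsRealization G d (Snew c s) :=
    fun h => Snew_real hll hnew hS' h
  have hexpM : ∀ (c s : ℝ) (ψ : Fin d → ℂ), expectation (Snew c s v) ψ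
      = c * expectation (S' (Sum.inl v)) ψ + s * expectation (S' (Sum.inr ())) ψ := by
    intro c s ψ
    simp only [hSnewdef, if_pos rfl]
    rw [exp_add, exp_smul, exp_smul]
  have hsplit' : ∀ ψ : Fin d → ℂ,
      ∑ i, w' i * (expectation (S' i) ψ) ^ 2
      = (∑ a ∈ Finset.univ.erase v, w' (Sum.inl a) * (expectation (S' (Sum.inl a)) ψ) ^ 2)
        + w' (Sum.inl v) * (expectation (S' (Sum.inl v)) ψ) ^ 2
        + w' (Sum.inr ()) * (expectation (S' (Sum.inr ())) ψ) ^ 2 := by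
    intro ψ
    rw [Fintype.sum_sum_type]
    congr 1
    · exact (Finset.sum_erase_add _ _ (Finset.mem_univ v)).symm
    · simp
  have hsumN : ∀ (c s : ℝ) (ψ : Fin d → ℂ),
      ∑ a, w a * (expectation (Snew c s a) ψ) ^ 2
      = (∑ a ∈ Finset.univ.erase v, w' (Sum.inl a) * (expectation (S' (Sum.inl a)) ψ) ^ 2)
        + w v * (c * expectation (S' (Sum.inl v)) ψ
            + s * expectation (S' (Sum.inr ())) ψ) ^ 2 := by
    intro c s ψ
    rw [← Finset.sum_erase_add _ _ (Finset.mem_univ v)]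
    congr 1
    · refine Finset.sum_congr rfl fun a ha => ?_
      have h := Finset.ne_of_mem_erase ha
      rw [hwa a h]
      congr 2
      simp only [hSnewdef, if_neg h]
    · rw [hexpM]
  have hle : betaVal S' w' ≤ alphaW G w := by
    apply betaVal_le hd
    intro ψ hψ
    set x := expectation (S' (Sum.inl v)) ψ with hxd
    set y := expectation (S' (Sum.inr ())) ψ with hyd
    obtain ⟨c, s, hcs, hxy⟩ := cs_exists x y
    have hreal := hSnew hcs
    have step1 : ∑ i, w' i * (expectation (S' i) ψ) ^ 2
        ≤ ∑ a, w a * (expectation (Snew c s a) ψ) ^ 2 := by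
      rw [hsplit' ψ, hsumN c s ψ, ← hxd, ← hyd, hxy]
      have h1 : w' (Sum.inl v) * x ^ 2 + w' (Sum.inr ()) * y ^ 2 ≤ w v * (x ^ 2 + y ^ 2) := by
        rw [hwv]
        nlinarith [sq_nonneg x, sq_nonneg y,
          le_max_left (w' (Sum.inl v)) (w' (Sum.inr ())),
          le_max_right (w' (Sum.inl v)) (w' (Sum.inr ()))]
      linarith
    have step2 : ∑ a, w a * (expectation (Snew c s a) ψ) ^ 2 ≤ betaVal (Snew c s) w :=
      betaVal_ge hreal.1 hreal.2.1 hw hψ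
    rw [hG d hd (Snew c s) hreal w hw] at step2
    linarith
  have hge : alphaW G w ≤ betaVal S' w' := by
    rcases le_total (w' (Sum.inr ())) (w' (Sum.inl v)) with hmax | hmax
    · have hcs : (1 : ℝ) ^ 2 + (0 : ℝ) ^ 2 = 1 := by norm_num
      have hreal := hSnew hcs
      rw [← hG d hd (Snew 1 0) hreal w hw]
      apply betaVal_le hd
      intro ψ hψ
      set x := expectation (S' (Sum.inl v)) ψ with hxd
      set y := expectation (S' (Sum.inr ())) ψ with hyd
      have goalle : ∑ a, w a * (expectation (Snew 1 0 a) ψ) ^ 2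
          ≤ ∑ i, w' i * (expectation (S' i) ψ) ^ 2 := by
        rw [hsumN 1 0 ψ, hsplit' ψ, ← hxd, ← hyd]
        have h1 : w v * (1 * x + 0 * y) ^ 2 = w' (Sum.inl v) * x ^ 2 := by
          rw [hwv, max_eq_left hmax]; ring
        have h2 : 0 ≤ w' (Sum.inr ()) * y ^ 2 :=
          mul_nonneg (hw' (Sum.inr ())) (sq_nonneg y)
        linarith
      exact le_trans goalle (betaVal_ge hH' hInv' hw' hψ)
    · have hcs : (0 : ℝ) ^ 2 + (1 : ℝ) ^ 2 = 1 := by norm_num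
      have hreal := hSnew hcs
      rw [← hG d hd (Snew 0 1) hreal w hw]
      apply betaVal_le hd
      intro ψ hψ
      set x := expectation (S' (Sum.inl v)) ψ with hxd
      set y := expectation (S' (Sum.inr ())) ψ with hyd
      have goalle : ∑ a, w a * (expectation (Snew 0 1 a) ψ) ^ 2
          ≤ ∑ i, w' i * (expectation (S' i) ψ) ^ 2 := by
        rw [hsumN 0 1 ψ, hsplit' ψ, ← hxd, ← hyd]
        have h1 : w v * (0 * x + 1 * y) ^ 2 = w' (Sum.inr ()) * y ^ 2 := by
          rw [hwv, max_eq_right hmax]; ring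
        have h2 : 0 ≤ w' (Sum.inl v) * x ^ 2 :=
          mul_nonneg (hw' (Sum.inl v)) (sq_nonneg x)
        linarith
      exact le_trans goalle (betaVal_ge hH' hInv' hw' hψ)
  rw [halpha]
  linarith
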